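/- arXiv:1601.05309 — 3 statements merged into one kernel-verified Lean document; each statement's English description precedes it below -/
import Mathlib

section
/- Let G(x) = Φ(x) be the standard normal CDF and define, for Δ > 0, the function H_Δ(x) = ½·Φ(x + Δ/2) + ½·Φ(x − Δ/2) (the CDF of an equal mixture of two unit Gaussians at ±Δ/2 convolved appropriately). Then the maximum over x of |H_Δ(x) − Φ(x)| satisfies lim_{Δ→0⁺} (sup_x |H_Δ(x) − Φ(x)|)/Δ² = 1/(8√(2πe)). -/
open MeasureTheory Real Filter

/-- The standard normal cumulative distribution function. -/
noncomputable def stdNormalCDF (x : ℝ) : ℝ :=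
  ∫ t in Set.Iic x, Real.exp (-t ^ 2 / 2) / Real.sqrt (2 * Real.pi)

namespace FirstOrderAux

/-- The standard normal density. -/
noncomputable def phi (t : ℝ) : ℝ := Real.exp (-t ^ 2 / 2) / Real.sqrt (2 * Real.pi)

lemma sqrt_two_pi_pos : 0 < Real.sqrt (2 * Real.pi) :=
  Real.sqrt_pos.2 (by positivity)

lemma phi_pos (t : ℝ) : 0 < phi t := div_pos (Real.exp_pos _) sqrt_two_pi_pos

lemma continuous_phi : Continuous phi := by
  unfold phi
  fun_prop

lemma hasDerivAt_phi (t : ℝ) : HasDerivAt phi (-t * phi t) t := by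
  have h1 : HasDerivAt (fun t : ℝ => -t ^ 2 / 2) (-t) t := by
    have := ((hasDerivAt_pow 2 t).neg).div_const 2
    simpa using this.congr_deriv (by ring)
  have h2 := (h1.exp).div_const (Real.sqrt (2 * Real.pi))
  have : Real.exp (-t ^ 2 / 2) * (-t) / Real.sqrt (2 * Real.pi) = -t * phi t := by
    unfold phi; ring
  rw [this] at h2
  exact h2

lemma continuous_dphi : Continuous (fun s : ℝ => -s * phi s) :=
  (continuous_neg.comp continuous_id).mul continuous_phi

lemma integrable_phi : Integrable phi := by
  have h := (integrable_exp_neg_mul_sq (by norm_num : (0:ℝ) < 1/2)).div_const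
    (Real.sqrt (2 * Real.pi))
  have he : phi = fun t : ℝ => Real.exp (-(1/2) * t ^ 2) / Real.sqrt (2 * Real.pi) := by
    funext t
    unfold phi
    norm_num [neg_div]
    ring_nf
  rw [he]
  exact h

lemma cdf_sub (a b : ℝ) : stdNormalCDF b - stdNormalCDF a = ∫ t in a..b, phi t :=
  intervalIntegral.integral_Iic_sub_Iic integrable_phi.integrableOn integrable_phi.integrableOn

lemma phi_diff_eq (a b : ℝ) : phi b - phi a = ∫ s in a..b, -s * phi s :=
  (intervalIntegral.integral_eq_sub_of_hasDerivAt (fun s _ => hasDerivAt_phi s)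
    (continuous_dphi.intervalIntegrable a b)).symm

lemma key_ineq (s : ℝ) : |s| * Real.exp (-s ^ 2 / 2) ≤ Real.exp (-(1:ℝ) ^ 2 / 2) := by
  have h1 : |s| ≤ Real.exp ((s ^ 2 - 1) / 2) := by
    have h2 := Real.add_one_le_exp ((s ^ 2 - 1) / 2)
    nlinarith [sq_abs s, sq_nonneg (|s| - 1)]
  calc |s| * Real.exp (-s ^ 2 / 2)
      ≤ Real.exp ((s ^ 2 - 1) / 2) * Real.exp (-s ^ 2 / 2) :=
        mul_le_mul_of_nonneg_right h1 (Real.exp_pos _).le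
    _ = Real.exp (-(1:ℝ) ^ 2 / 2) := by rw [← Real.exp_add]; congr 1; ring

lemma abs_dphi_le (s : ℝ) : |(-s) * phi s| ≤ phi 1 := by
  have : |(-s) * phi s| = |s| * Real.exp (-s ^ 2 / 2) / Real.sqrt (2 * Real.pi) := by
    rw [abs_mul, abs_neg, abs_of_pos (phi_pos s)]
    unfold phi; ring
  rw [this]
  unfold phi
  exact div_le_div_of_nonneg_right (key_ineq s) sqrt_two_pi_pos.le |>.trans_eq rfl

lemma phi_one : phi 1 = 1 / Real.sqrt (2 * Real.pi * Real.exp 1) := by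
  unfold phi
  rw [Real.sqrt_mul (by positivity) (Real.exp 1), ← Real.exp_half]
  have h1 : Real.exp (-(1:ℝ) ^ 2 / 2) = (Real.exp (1 / 2))⁻¹ := by
    rw [← Real.exp_neg]; norm_num
  rw [h1]
  field_simp

/-- The difference function. -/
noncomputable def g (h x : ℝ) : ℝ :=
  (1 / 2) * stdNormalCDF (x + h) + (1 / 2) * stdNormalCDF (x - h) - stdNormalCDF x

lemma g_eq (h x : ℝ) : g h x = (1 / 2) * ∫ t in (0:ℝ)..h, (phi (x + t) - phi (x - t)) := by
  have hi1 : IntervalIntegrable (fun t => phi (x + t)) volume 0 h :=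
    (continuous_phi.comp (continuous_const.add continuous_id)).intervalIntegrable 0 h
  have hi2 : IntervalIntegrable (fun t => phi (x - t)) volume 0 h :=
    (continuous_phi.comp (continuous_const.sub continuous_id)).intervalIntegrable 0 h
  rw [intervalIntegral.integral_sub hi1 hi2,
    intervalIntegral.integral_comp_add_left phi x,
    intervalIntegral.integral_comp_sub_left phi x]
  have e1 := cdf_sub (x + 0) (x + h)
  have e2 := cdf_sub (x - h) (x - 0)
  unfold g
  rw [show x + 0 = x by ring, show x - 0 = x by ring] at *
  rw [← e1, ← e2]
  ring

lemma abs_phi_diff_le (x t : ℝ) (ht : 0 ≤ t) : |phi (x + t) - phi (x - t)| ≤ 2 * phi 1 * t := by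
  rw [phi_diff_eq (x - t) (x + t)]
  have := intervalIntegral.norm_integral_le_of_norm_le_const
    (a := x - t) (b := x + t) (C := phi 1) (f := fun s => -s * phi s)
    (fun s _ => by rw [Real.norm_eq_abs]; exact abs_dphi_le s)
  simpa [abs_of_nonneg ht, mul_comm, two_mul] using this.trans_eq (by
    rw [show x + t - (x - t) = 2 * t by ring, abs_of_nonneg (by linarith)]; ring)

lemma g_abs_le (h x : ℝ) (hh : 0 ≤ h) : |g h x| ≤ phi 1 / 2 * h ^ 2 := by
  rw [g_eq]
  have hiD : IntervalIntegrable (fun t => |phi (x + t) - phi (x - t)|) volume 0 h :=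
    (((continuous_phi.comp (continuous_const.add continuous_id)).sub
      (continuous_phi.comp (continuous_const.sub continuous_id))).abs).intervalIntegrable 0 h
  have hiU : IntervalIntegrable (fun t : ℝ => 2 * phi 1 * t) volume 0 h :=
    (continuous_const.mul continuous_id).intervalIntegrable 0 h
  have h1 : |∫ t in (0:ℝ)..h, (phi (x + t) - phi (x - t))|
      ≤ ∫ t in (0:ℝ)..h, |phi (x + t) - phi (x - t)| :=
    intervalIntegral.abs_integral_le_integral_abs hh
  have h2 : (∫ t in (0:ℝ)..h, |phi (x + t) - phi (x - t)|)
      ≤ ∫ t in (0:ℝ)..h, 2 * phi 1 * t :=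
    intervalIntegral.integral_mono_on hh hiD hiU
      (fun t htt => abs_phi_diff_le x t htt.1)
  have h3 : (∫ t in (0:ℝ)..h, 2 * phi 1 * t) = phi 1 * h ^ 2 := by
    rw [intervalIntegral.integral_const_mul, integral_id]
    ring
  rw [abs_mul]
  have : |(1:ℝ)/2| = 1/2 := by norm_num
  rw [this]
  nlinarith [h1.trans (h2.trans_eq h3)]

lemma g_one_le (Δ : ℝ) (h0 : 0 < Δ) (h2 : Δ < 2) :
    (1 - Δ / 2) * phi (1 + Δ / 2) / 8 * Δ ^ 2 ≤ |g (Δ / 2) 1| := by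
  set h := Δ / 2 with hh
  have hh0 : 0 < h := by positivity
  have hh1 : h < 1 := by rw [hh]; linarith
  set c := (1 - h) * phi (1 + h) with hc
  have hc0 : 0 ≤ c := mul_nonneg (by linarith) (phi_pos _).le
  -- pointwise bound on the inner integrand
  have step1 : ∀ t ∈ Set.Icc (0:ℝ) h, phi (1 + t) - phi (1 - t) ≤ -(2 * c * t) := by
    intro t ⟨ht0, hth⟩
    rw [phi_diff_eq (1 - t) (1 + t)]
    have hab : (1:ℝ) - t ≤ 1 + t := by linarith
    have hmono : ∀ s ∈ Set.Icc (1 - t) (1 + t), -s * phi s ≤ -c := by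
      intro s ⟨hs1, hs2⟩
      have hs0 : (0:ℝ) ≤ s := by linarith
      have h1h : (1:ℝ) - h ≤ s := by linarith
      have hphis : phi (1 + h) ≤ phi s := by
        unfold phi
        apply div_le_div_of_nonneg_right _ sqrt_two_pi_pos.le
        apply Real.exp_le_exp.2
        nlinarith
      have : c ≤ s * phi s := by
        rw [hc]
        exact mul_le_mul h1h hphis (phi_pos _).le hs0
      linarith
    have hint : (∫ s in (1 - t)..(1 + t), -s * phi s) ≤ ∫ s in (1 - t)..(1 + t), (-c : ℝ) :=
      intervalIntegral.integral_mono_on hab (continuous_dphi.intervalIntegrable _ _)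
        (intervalIntegrable_const) hmono
    have : (∫ s in (1 - t)..(1 + t), (-c : ℝ)) = -(2 * c * t) := by
      rw [intervalIntegral.integral_const]
      simp
      ring
    linarith [hint.trans_eq this]
  -- integrate the bound
  have hiD : IntervalIntegrable (fun t => phi (1 + t) - phi (1 - t)) volume 0 h :=
    ((continuous_phi.comp (continuous_const.add continuous_id)).sub
      (continuous_phi.comp (continuous_const.sub continuous_id))).intervalIntegrable 0 h
  have hiU : IntervalIntegrable (fun t : ℝ => -(2 * c * t)) volume 0 h :=
    ((continuous_const.mul continuous_id).neg).intervalIntegrable 0 h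
  have step2 : (∫ t in (0:ℝ)..h, (phi (1 + t) - phi (1 - t)))
      ≤ ∫ t in (0:ℝ)..h, -(2 * c * t) :=
    intervalIntegral.integral_mono_on hh0.le hiD hiU step1
  have step3 : (∫ t in (0:ℝ)..h, -(2 * c * t)) = -(c * h ^ 2) := by
    rw [intervalIntegral.integral_neg, intervalIntegral.integral_const_mul, integral_id]
    ring
  have hg1 : g h 1 ≤ -(c * h ^ 2 / 2) := by
    rw [g_eq]
    nlinarith [step2.trans_eq step3]
  have habs : c * h ^ 2 / 2 ≤ |g h 1| := by
    have := neg_le_abs (g h 1)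
    linarith
  calc (1 - Δ / 2) * phi (1 + Δ / 2) / 8 * Δ ^ 2 = c * h ^ 2 / 2 := by
        rw [hc, hh]; ring
    _ ≤ |g h 1| := habs

lemma bdd (Δ : ℝ) (hΔ : 0 ≤ Δ) :
    ∀ x : ℝ, |(1 / 2) * stdNormalCDF (x + Δ / 2) + (1 / 2) * stdNormalCDF (x - Δ / 2)
      - stdNormalCDF x| ≤ phi 1 / 8 * Δ ^ 2 := by
  intro x
  have := g_abs_le (Δ / 2) x (by linarith)
  unfold g at this
  calc |(1 / 2) * stdNormalCDF (x + Δ / 2) + (1 / 2) * stdNormalCDF (x - Δ / 2) - stdNormalCDF x|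
      ≤ phi 1 / 2 * (Δ / 2) ^ 2 := this
    _ = phi 1 / 8 * Δ ^ 2 := by ring

end FirstOrderAux

open FirstOrderAux in
theorem first_order_worst_case_limit :
    Tendsto
      (fun Δ : ℝ =>
        (⨆ x : ℝ, |(1 / 2) * stdNormalCDF (x + Δ / 2) + (1 / 2) * stdNormalCDF (x - Δ / 2)
          - stdNormalCDF x|) / Δ ^ 2)
      (nhdsWithin 0 (Set.Ioi 0))
      (nhds (1 / (8 * Real.sqrt (2 * Real.pi * Real.exp 1)))) := by
  have hLphi : 1 / (8 * Real.sqrt (2 * Real.pi * Real.exp 1)) = phi 1 / 8 := by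
    rw [phi_one]
    have : Real.sqrt (2 * Real.pi * Real.exp 1) ≠ 0 := by positivity
    field_simp
  rw [hLphi]
  have hlowT : Tendsto (fun Δ : ℝ => (1 - Δ / 2) * phi (1 + Δ / 2) / 8)
      (nhdsWithin 0 (Set.Ioi 0)) (nhds (phi 1 / 8)) := by
    have hc : Continuous (fun Δ : ℝ => (1 - Δ / 2) * phi (1 + Δ / 2) / 8) := by
      have := continuous_phi
      fun_prop
    have := Tendsto.mono_left (hc.tendsto 0) (nhdsWithin_le_nhds (s := Set.Ioi (0:ℝ)))
    simpa using this
  refine tendsto_of_tendsto_of_tendsto_of_le_of_le' hlowT tendsto_const_nhds ?_ ?_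
  · -- lower bound
    filter_upwards [Ioo_mem_nhdsGT_of_mem (by norm_num : (0:ℝ) ∈ Set.Ico 0 2)]
      with Δ hΔ
    obtain ⟨h0, h2⟩ := hΔ
    have hΔ2 : (0:ℝ) < Δ ^ 2 := by positivity
    have hbdd : BddAbove (Set.range fun x : ℝ =>
        |(1 / 2) * stdNormalCDF (x + Δ / 2) + (1 / 2) * stdNormalCDF (x - Δ / 2)
          - stdNormalCDF x|) := ⟨phi 1 / 8 * Δ ^ 2, by
      rintro y ⟨x, rfl⟩
      exact bdd Δ h0.le x⟩
    have h1 : (1 - Δ / 2) * phi (1 + Δ / 2) / 8 * Δ ^ 2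
        ≤ ⨆ x : ℝ, |(1 / 2) * stdNormalCDF (x + Δ / 2) + (1 / 2) * stdNormalCDF (x - Δ / 2)
          - stdNormalCDF x| := by
      refine le_trans (g_one_le Δ h0 h2) ?_
      have := le_ciSup hbdd (1:ℝ)
      unfold g at this ⊢
      exact this
    rw [le_div_iff₀ hΔ2]
    exact h1
  · -- upper bound
    filter_upwards [self_mem_nhdsWithin] with Δ hΔ
    have h0 : (0:ℝ) < Δ := hΔ
    have hΔ2 : (0:ℝ) < Δ ^ 2 := by positivity
    rw [div_le_iff₀ hΔ2]
    exact ciSup_le (fun x => bdd Δ h0.le x)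
end

section
/- Suppose f : ℝ → ℝ is integrable with Fourier transform g(ω) = ∫ f(x)e^{iωx} dx vanishing for |ω| > W, and suppose f is continuous. Then for Δ = 1/(2W) (with the convention that the band limit is π/Δ in angular frequency), f is determined by its samples: f(x) = Σ_{n∈ℤ} f(nΔ)·sinc(π(x/Δ − n)) for all x, where sinc(t) = sin(t)/t. -/
open MeasureTheory Filter Real

/-- The (unnormalised) _root_.sinc function, `sin t / t`, with value `1` at `t = 0`. -/
noncomputable def sinc (t : ℝ) : ℝ := if t = 0 then 1 else Real.sin t / t

open FourierTransform Set in
lemma shannon_aux_measurable_liftIoc {T : ℝ} [hT : Fact (0 < T)] (a : ℝ) {g : ℝ → ℂ}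
    (hg : Measurable g) : Measurable (AddCircle.liftIoc T a g) := by
  have h : AddCircle.liftIoc T a g
      = (g ∘ Subtype.val) ∘ (AddCircle.measurableEquivIoc T a) := rfl
  rw [h]
  exact (hg.comp measurable_subtype_coe).comp (AddCircle.measurableEquivIoc T a).measurable

lemma shannon_aux_norm_liftIoc_le {T : ℝ} [hT : Fact (0 < T)] (a : ℝ) (g : ℝ → ℂ) (C : ℝ)
    (hC : ∀ x, ‖g x‖ ≤ C) (z : AddCircle T) : ‖AddCircle.liftIoc T a g z‖ ≤ C := by
  have h : AddCircle.liftIoc T a g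
      = (g ∘ Subtype.val) ∘ (AddCircle.equivIoc T a) := rfl
  rw [h]; exact hC _

lemma shannon_aux_integral_cexp_Ioc (W a : ℝ) (hW : 0 < W) :
    ∫ ξ in Set.Ioc (-W) W, Complex.exp ((2*π*a*ξ : ℝ) * Complex.I)
      = (((2*W) * _root_.sinc (2*π*a*W) : ℝ) : ℂ) := by
  rw [← intervalIntegral.integral_of_le (by linarith : -W ≤ W)]
  rcases eq_or_ne a 0 with rfl | ha
  · simp only [mul_zero, zero_mul, Complex.ofReal_zero, Complex.exp_zero, _root_.sinc, if_pos rfl,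
      mul_one]
    rw [intervalIntegral.integral_const]
    push_cast
    simp [smul_eq_mul]
    ring
  · have hπ := Real.pi_ne_zero
    have hπa : (2*π*a) ≠ 0 := by
      simp only [mul_ne_zero_iff]
      exact ⟨⟨two_ne_zero, hπ⟩, ha⟩
    have hθ : (2*π*a*W) ≠ 0 := mul_ne_zero hπa (by linarith)
    have hc : ((2*π*a : ℝ) : ℂ) * Complex.I ≠ 0 := by
      apply mul_ne_zero _ Complex.I_ne_zero
      exact_mod_cast hπa
    have h1 : ∀ ξ : ℝ, ((2*π*a*ξ : ℝ) : ℂ) * Complex.I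
        = (((2*π*a : ℝ) : ℂ) * Complex.I) * ξ := by
      intro ξ; push_cast; ring
    simp_rw [h1]
    rw [integral_exp_mul_complex hc]
    have h2 : ((2*π*a:ℝ):ℂ) * Complex.I * (W:ℂ) = ((2*π*a*W : ℝ):ℂ) * Complex.I := by
      push_cast; ring
    have h3 : ((2*π*a:ℝ):ℂ) * Complex.I * ((-W:ℝ):ℂ) = ((-(2*π*a*W) : ℝ):ℂ) * Complex.I := by
      push_cast; ring
    rw [h2, h3, Complex.exp_mul_I, Complex.exp_mul_I]
    rw [Complex.ofReal_neg, Complex.cos_neg, Complex.sin_neg]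
    rw [div_eq_iff hc]
    rw [_root_.sinc, if_neg hθ]
    rw [← Complex.ofReal_sin, ← Complex.ofReal_cos]
    have hr : (2*W) * (Real.sin (2*π*a*W) / (2*π*a*W)) * (2*π*a) = 2 * Real.sin (2*π*a*W) := by
      field_simp
    calc (↑(Real.cos (2*π*a*W)) + ↑(Real.sin (2*π*a*W)) * Complex.I -
          (↑(Real.cos (2*π*a*W)) + -↑(Real.sin (2*π*a*W)) * Complex.I) : ℂ)
        = ((2 * Real.sin (2*π*a*W) : ℝ) : ℂ) * Complex.I := by push_cast; ring
      _ = (((2*W) * (Real.sin (2*π*a*W) / (2*π*a*W)) * (2*π*a) : ℝ) : ℂ) * Complex.I := by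
          rw [hr]
      _ = ↑(2*W * (Real.sin (2*π*a*W) / (2*π*a*W))) * (↑(2*π*a) * Complex.I) := by
          push_cast; ring

lemma shannon_aux_tendsto_Icc :
    Tendsto (fun N : ℕ => Finset.Icc (-(N : ℤ)) (N : ℤ)) atTop atTop := by
  apply tendsto_atTop_finset_of_monotone
  · intro a b hab
    exact Finset.Icc_subset_Icc (by exact_mod_cast neg_le_neg (Int.ofNat_le.2 hab))
      (by exact_mod_cast hab)
  · intro n
    exact ⟨n.natAbs, by
      simp [Finset.mem_Icc, Int.le_natAbs, neg_le, ← Int.abs_eq_natAbs,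
        abs_le.mp (le_refl |n|)]⟩

open FourierTransform Set in
theorem shannon_sampling_theorem
    (f : ℝ → ℂ) (hcont : Continuous f)
    (hL1 : Integrable f volume) (hL2 : MemLp f 2 volume)
    (W Δ : ℝ) (hW : 0 < W) (hΔ : Δ = 1 / (2 * W))
    (hband : ∀ ω : ℝ, Real.pi / Δ < |ω| →
      (∫ x : ℝ, f x * Complex.exp (Complex.I * ω * x)) = 0) :
    ∀ x : ℝ,
      Tendsto (fun N : ℕ => ∑ n ∈ Finset.Icc (-(N : ℤ)) (N : ℤ),
          f (n * Δ) * (_root_.sinc (Real.pi * (x / Δ - n)) : ℂ))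
        atTop (nhds (f x)) := by
  intro x
  have hΔpos : 0 < Δ := by rw [hΔ]; positivity
  have hΔC : (Δ : ℂ) = 1 / (2 * (W:ℂ)) := by
    rw [hΔ]; push_cast; ring
  have hWC : ((2:ℂ) * W) ≠ 0 := by
    have : (2*W : ℝ) ≠ 0 := by linarith
    exact_mod_cast this
  -- Step 1: the Fourier transform vanishes for |ξ| > W
  have hvan' : ∀ ξ : ℝ, W < |ξ| → 𝓕 f ξ = 0 := by
    intro ξ hξ
    have h1 : Real.pi / Δ < |(-(2 * Real.pi * ξ))| := by
      rw [hΔ, abs_neg, abs_mul, abs_of_pos (by positivity : (0:ℝ) < 2 * Real.pi)]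
      rw [div_div_eq_mul_div, div_one]
      nlinarith [Real.pi_pos]
    have h2 := hband _ h1
    rw [Real.fourier_eq', ← h2]
    apply integral_congr_ae
    filter_upwards with v
    rw [smul_eq_mul]
    simp only [RCLike.inner_apply, starRingEnd_apply, star_trivial]
    rw [mul_comm]
    congr 1
    push_cast
    ring
  -- Step 2: continuity of the Fourier transform
  have hcont𝓕 : Continuous (𝓕 f) :=
    VectorFourier.fourierIntegral_continuous Real.continuous_fourierChar
      (by apply continuous_inner) hL1
  -- Step 3: vanishing for |ξ| ≥ W
  have hvan : ∀ ξ : ℝ, W ≤ |ξ| → 𝓕 f ξ = 0 := by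
    intro ξ hξ
    rcases eq_or_lt_of_le hξ with h | h
    · have hseq : Tendsto (fun n : ℕ => ξ * (1 + 1 / ((n : ℝ) + 1))) atTop (nhds ξ) := by
        have h1 : Tendsto (fun n : ℕ => 1 + 1 / ((n : ℝ) + 1)) atTop (nhds 1) := by
          simpa using ((tendsto_one_div_add_atTop_nhds_zero_nat (𝕜 := ℝ)).const_add 1)
        simpa using (tendsto_const_nhds (x := ξ)).mul h1
      have h0 : Tendsto (fun n : ℕ => 𝓕 f (ξ * (1 + 1 / ((n : ℝ) + 1)))) atTop
          (nhds (𝓕 f ξ)) := (hcont𝓕.tendsto ξ).comp hseq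
      have hz : ∀ n : ℕ, 𝓕 f (ξ * (1 + 1 / ((n : ℝ) + 1))) = 0 := by
        intro n
        apply hvan'
        have hn : (1:ℝ) < 1 + 1 / ((n : ℝ) + 1) := by
          have : (0:ℝ) < 1 / ((n : ℝ) + 1) := by positivity
          linarith
        rw [abs_mul, abs_of_pos (by linarith : (0:ℝ) < 1 + 1 / ((n : ℝ) + 1)), ← h]
        nlinarith [abs_nonneg ξ, hW, h.symm ▸ hW]
      rw [tendsto_congr hz] at h0
      exact tendsto_nhds_unique h0 tendsto_const_nhds
    · exact hvan' ξ h
  -- Step 4, 5: integrability of the Fourier transform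
  have hsupp : HasCompactSupport (𝓕 f) := by
    apply HasCompactSupport.intro (isCompact_Icc (a := -W) (b := W))
    intro ξ hξ
    apply hvan
    simp only [mem_Icc, not_and_or, not_le] at hξ
    rcases hξ with h | h
    · rw [abs_of_neg (by linarith)]; linarith
    · rw [abs_of_pos (by linarith)]; linarith
  have hInt𝓕 : Integrable (𝓕 f) := hcont𝓕.integrable_of_hasCompactSupport hsupp
  -- Step 6: Fourier inversion on the interval
  have hinv : ∀ y : ℝ, ∫ ξ in Ioc (-W) W,
      Complex.exp ((2 * π * (ξ * y) : ℝ) * Complex.I) * 𝓕 f ξ = f y := by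
    intro y
    have h1 : 𝓕⁻ (𝓕 f) y = f y := by rw [hcont.fourierInv_fourier_eq hL1 hInt𝓕]
    rw [Real.fourierInv_eq'] at h1
    rw [← h1]
    rw [setIntegral_eq_integral_of_forall_compl_eq_zero]
    · apply integral_congr_ae; filter_upwards with ξ
      rw [smul_eq_mul]
      simp only [RCLike.inner_apply, starRingEnd_apply, star_trivial]
      rw [mul_comm y ξ]
    · intro ξ hξ
      have : 𝓕 f ξ = 0 := by
        apply hvan
        simp only [mem_Ioc, not_and_or, not_lt, not_le] at hξ
        rcases hξ with h | h
        · rw [abs_of_nonpos (by linarith)]; linarith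
        · rw [abs_of_pos (by linarith)]; linarith
      simp [this]
  -- circle setup
  haveI : Fact (0 < 2 * W) := ⟨by linarith⟩
  have hIocW : -W + 2*W = W := by ring
  set μ : Measure (AddCircle (2*W)) := AddCircle.haarAddCircle with hμ
  set ψ : ℝ → ℂ := fun ξ => Complex.exp ((2*π*(ξ*x) : ℝ) * Complex.I) with hψdef
  set G₀ : AddCircle (2*W) → ℂ := AddCircle.liftIoc (2*W) (-W) (𝓕 f) with hG₀
  set Φ₀ : AddCircle (2*W) → ℂ :=
    AddCircle.liftIoc (2*W) (-W) (fun ξ => starRingEnd ℂ (ψ ξ)) with hΦ₀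
  obtain ⟨C, hC⟩ := hcont𝓕.bounded_above_of_compact_support hsupp
  have memG : MemLp G₀ 2 μ := by
    refine MemLp.of_bound
      ((shannon_aux_measurable_liftIoc _ hcont𝓕.measurable).aestronglyMeasurable) C ?_
    exact ae_of_all _ (shannon_aux_norm_liftIoc_le _ _ C hC)
  have memΦ : MemLp Φ₀ 2 μ := by
    refine MemLp.of_bound ((shannon_aux_measurable_liftIoc _
      (by exact continuous_star.measurable.comp (by fun_prop))).aestronglyMeasurable) 1 ?_
    refine ae_of_all _ (shannon_aux_norm_liftIoc_le _ _ 1 (fun ξ => ?_))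
    have hns : ‖(starRingEnd ℂ) (ψ ξ)‖ = ‖ψ ξ‖ := norm_star _
    rw [hns, hψdef]
    simp [Complex.norm_exp]
  set G : Lp ℂ 2 μ := memG.toLp G₀ with hG
  set P : Lp ℂ 2 μ := memΦ.toLp Φ₀ with hP
  have hs := hasSum_fourier_series_L2 G
  have hs2 := (ContinuousLinearMap.hasSum (innerSL ℂ P)) hs
  have hcoeff : ∀ n : ℤ, fourierCoeff (⇑G) n = fourierCoeff G₀ n := by
    intro n
    apply integral_congr_ae
    filter_upwards [memG.coeFn_toLp] with z hz
    rw [hz]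
  have hinner : ∀ h : Lp ℂ 2 μ,
      (inner ℂ P h : ℂ) = ∫ z, starRingEnd ℂ (Φ₀ z) * h z ∂μ := by
    intro h
    rw [MeasureTheory.L2.inner_def]
    apply integral_congr_ae
    filter_upwards [memΦ.coeFn_toLp] with z hz
    rw [RCLike.inner_apply, hz]
    exact mul_comm _ _
  have hIoc : ∀ F : AddCircle (2*W) → ℂ,
      ∫ z, F z ∂μ = (1 / (2*W) : ℝ) • ∫ ξ in Ioc (-W) (-W + 2*W), F ξ := by
    intro F
    have h1 := AddCircle.integral_preimage (2*W) (-W) F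
    have h2 : (volume : Measure (AddCircle (2*W))) = ENNReal.ofReal (2*W) • μ :=
      AddCircle.volume_eq_smul_haarAddCircle
    rw [h2, integral_smul_measure] at h1
    rw [h1, smul_smul, ENNReal.toReal_ofReal (by linarith),
      one_div, inv_mul_cancel₀ (by linarith : (2*W) ≠ 0), one_smul]
  -- Fourier coefficients of G₀
  have hcoeffval : ∀ n : ℤ, fourierCoeff G₀ n = (Δ : ℂ) * f (-(n*Δ)) := by
    intro n
    rw [fourierCoeff_eq_intervalIntegral G₀ n (-W)]
    rw [intervalIntegral.integral_of_le (by linarith : -W ≤ -W + 2*W)]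
    have hEq : ∀ ξ ∈ Ioc (-W) (-W + 2*W), fourier (-n) (ξ : AddCircle (2*W)) • G₀ ↑ξ
        = Complex.exp ((2*π*(ξ*(-(n*Δ))) : ℝ) * Complex.I) * 𝓕 f ξ := by
      intro ξ hξ
      rw [hG₀, AddCircle.liftIoc_coe_apply hξ, smul_eq_mul]
      congr 1
      rw [fourier_coe_apply]
      congr 1
      push_cast [hΔC]
      field_simp
      try exact Or.inl trivial
    rw [setIntegral_congr_fun measurableSet_Ioc hEq, hIocW, hinv (-(n*Δ))]
    rw [hΔ]
    push_cast
    rw [Complex.real_smul]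
    push_cast
    ring
  -- inner products with the basis vectors
  have hPfourier : ∀ n : ℤ,
      (inner ℂ P (fourierLp 2 n) : ℂ) = ((_root_.sinc (π*(x/Δ - (-n : ℤ))) : ℝ) : ℂ) := by
    intro n
    rw [hinner]
    have he : (fun z => starRingEnd ℂ (Φ₀ z) * (fourierLp (T := 2*W) 2 n : AddCircle (2*W) → ℂ) z)
        =ᵐ[μ] fun z => starRingEnd ℂ (Φ₀ z) * fourier n z := by
      filter_upwards [coeFn_fourierLp (T := 2*W) 2 n] with z hz
      rw [hz]
    rw [integral_congr_ae he, hIoc]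
    have hEq : ∀ ξ ∈ Ioc (-W) (-W + 2*W),
        starRingEnd ℂ (Φ₀ (ξ : AddCircle (2*W))) * fourier n (ξ : AddCircle (2*W))
          = Complex.exp ((2*π*(x + n*Δ)*ξ : ℝ) * Complex.I) := by
      intro ξ hξ
      rw [hΦ₀, AddCircle.liftIoc_coe_apply hξ, Complex.conj_conj, fourier_coe_apply, hψdef,
        ← Complex.exp_add]
      congr 1
      push_cast [hΔC]
      field_simp
    rw [setIntegral_congr_fun measurableSet_Ioc hEq, hIocW]
    rw [shannon_aux_integral_cexp_Ioc W (x + n*Δ) hW]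
    have harg : 2*π*(x + n*Δ)*W = π*(x/Δ - (-n : ℤ)) := by
      rw [hΔ]
      push_cast
      field_simp
      ring
    rw [harg, Complex.real_smul, ← Complex.ofReal_mul]
    congr 1
    field_simp
  -- inner product with G
  have hPG : (inner ℂ P G : ℂ) = (Δ:ℂ) * f x := by
    rw [hinner]
    have he : (fun z => starRingEnd ℂ (Φ₀ z) * (⇑G) z)
        =ᵐ[μ] fun z => starRingEnd ℂ (Φ₀ z) * G₀ z := by
      filter_upwards [memG.coeFn_toLp] with z hz
      rw [hz]
    rw [integral_congr_ae he, hIoc]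
    have hEq : ∀ ξ ∈ Ioc (-W) (-W + 2*W),
        starRingEnd ℂ (Φ₀ (ξ : AddCircle (2*W))) * G₀ (ξ : AddCircle (2*W))
          = Complex.exp ((2*π*(ξ*x) : ℝ) * Complex.I) * 𝓕 f ξ := by
      intro ξ hξ
      rw [hΦ₀, AddCircle.liftIoc_coe_apply hξ, Complex.conj_conj, hG₀,
        AddCircle.liftIoc_coe_apply hξ, hψdef]
    rw [setIntegral_congr_fun measurableSet_Ioc hEq, hIocW, hinv x]
    rw [hΔ]
    push_cast
    rw [Complex.real_smul]
    push_cast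
    ring
  -- assemble the HasSum
  have h1 : ∀ n : ℤ, (innerSL ℂ P) (fourierCoeff (⇑G) n • fourierLp 2 n)
      = (Δ:ℂ) * (f ((-n : ℤ) * Δ) * ((_root_.sinc (π*(x/Δ - (-n : ℤ))) : ℝ) : ℂ)) := by
    intro n
    rw [innerSL_apply_apply, inner_smul_right, hcoeff n, hcoeffval n, hPfourier n]
    have : ((-n : ℤ) : ℝ) * Δ = -(n*Δ) := by push_cast; ring
    rw [this]
    ring
  have h2 : (innerSL ℂ P) G = (Δ:ℂ) * f x := by rw [innerSL_apply_apply]; exact hPG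
  simp only [h1, h2] at hs2
  have hΔne : (Δ:ℂ) ≠ 0 := by
    have : Δ ≠ 0 := ne_of_gt hΔpos
    exact_mod_cast this
  have hsum2 : HasSum
      (fun n : ℤ => f ((-n : ℤ) * Δ) * ((_root_.sinc (π*(x/Δ - (-n : ℤ))) : ℝ) : ℂ)) (f x) := by
    have h3 := hs2.mul_left ((Δ:ℂ)⁻¹)
    simp only [← mul_assoc, inv_mul_cancel₀ hΔne, one_mul] at h3
    exact h3
  have hsum3 : HasSum
      (fun n : ℤ => f (n * Δ) * ((_root_.sinc (π*(x/Δ - n)) : ℝ) : ℂ)) (f x) := by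
    apply (Equiv.neg ℤ).hasSum_iff.mp
    convert hsum2 using 1
    funext n; rfl
  exact hsum3.comp shannon_aux_tendsto_Icc
end

section
/- Let g(x) = p·φ(x − a) + (1−p)·φ(x + a) with φ the standard normal density, p ∈ (0,1), a > 0, and let G be its CDF. Let Φ_m be the CDF of a normal distribution matching the mean and variance of g, i.e. mean μ = (2p−1)a and variance 1 + 4p(1−p)a². Then sup_x |G(x) − Φ_m(x)| = O(a³) as a → 0⁺, uniformly in p. -/
open MeasureTheory Set

noncomputable def phi (t : ℝ) : ℝ := Real.exp (-t ^ 2 / 2) / Real.sqrt (2 * Real.pi)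

lemma phi_cont : Continuous phi := by
  unfold phi
  fun_prop

lemma phi_integrable : Integrable phi := by
  have h : Integrable (fun t : ℝ => Real.exp (-(1/2) * t ^ 2)) := integrable_exp_neg_mul_sq (by norm_num)
  have : phi = fun t => Real.exp (-(1/2) * t ^ 2) / Real.sqrt (2 * Real.pi) := by
    funext t; unfold phi; ring_nf
  rw [this]
  exact h.div_const _

lemma hasDerivAt_cdf (x : ℝ) : HasDerivAt stdNormalCDF (phi x) x := by
  have key : ∀ y : ℝ, stdNormalCDF y = stdNormalCDF 0 + ∫ t in (0:ℝ)..y, phi t := by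
    intro y
    have := intervalIntegral.integral_Iic_sub_Iic (phi_integrable.integrableOn (s := Iic 0))
      (phi_integrable.integrableOn (s := Iic y))
    unfold stdNormalCDF
    rw [show (fun t : ℝ => Real.exp (-t ^ 2 / 2) / Real.sqrt (2 * Real.pi)) = phi from rfl] at *
    linarith [this]
  have h1 : HasDerivAt (fun y => stdNormalCDF 0 + ∫ t in (0:ℝ)..y, phi t) (phi x) x := by
    have := intervalIntegral.integral_hasDerivAt_right
      (phi_integrable.intervalIntegrable (a := 0) (b := x))
      phi_cont.aestronglyMeasurable.stronglyMeasurableAtFilter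
      phi_cont.continuousAt
    exact (this.const_add (stdNormalCDF 0))
  have : stdNormalCDF = fun y => stdNormalCDF 0 + ∫ t in (0:ℝ)..y, phi t := funext key
  rw [this]
  exact h1

lemma hasDerivAt_phi (t : ℝ) : HasDerivAt phi (-t * phi t) t := by
  have h1 : HasDerivAt (fun t : ℝ => -t ^ 2 / 2) (-t) t := by
    have := ((hasDerivAt_pow 2 t).neg).div_const 2
    exact this.congr_deriv (by ring)
  have h2 := (h1.exp).div_const (Real.sqrt (2 * Real.pi))
  refine h2.congr_deriv (Eq.symm ?_)
  unfold phi; ring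

lemma hasDerivAt_phi' (t : ℝ) :
    HasDerivAt (fun t => -t * phi t) ((t ^ 2 - 1) * phi t) t := by
  have h := ((hasDerivAt_id t).neg).mul (hasDerivAt_phi t)
  refine h.congr_deriv (Eq.symm ?_)
  simp only [Pi.neg_apply, id]
  ring

lemma sqrt_two_pi_ge_two : (2 : ℝ) ≤ Real.sqrt (2 * Real.pi) := by
  have : (4 : ℝ) ≤ 2 * Real.pi := by nlinarith [Real.pi_gt_three]
  calc (2:ℝ) = Real.sqrt 4 := by rw [show (4:ℝ) = 2^2 by norm_num, Real.sqrt_sq]; norm_num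
  _ ≤ Real.sqrt (2 * Real.pi) := Real.sqrt_le_sqrt this

lemma exp_bound1 (t : ℝ) : |t| * Real.exp (-t ^ 2 / 2) ≤ 1 := by
  have h : |t| ≤ Real.exp (t ^ 2 / 2) := by
    have := Real.add_one_le_exp (t ^ 2 / 2)
    nlinarith [sq_nonneg (|t| - 1), sq_abs t]
  have hpos := Real.exp_pos (t ^ 2 / 2)
  rw [show -t^2/2 = -(t^2/2) by ring, Real.exp_neg]
  rw [mul_inv_le_iff₀ hpos] <;> simpa using h

lemma exp_bound2 (t : ℝ) : t ^ 2 * Real.exp (-t ^ 2 / 2) ≤ 1 := by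
  have h : t ^ 2 ≤ Real.exp (t ^ 2 / 2) := by
    have h4 := Real.add_one_le_exp (t ^ 2 / 4)
    have : Real.exp (t^2/2) = Real.exp (t^2/4) * Real.exp (t^2/4) := by
      rw [← Real.exp_add]; ring_nf
    nlinarith [sq_nonneg (t^2/4 - 1), Real.exp_pos (t^2/4), sq_nonneg t]
  have hpos := Real.exp_pos (t ^ 2 / 2)
  rw [show -t^2/2 = -(t^2/2) by ring, Real.exp_neg]
  rw [mul_inv_le_iff₀ hpos]; simpa using h

lemma exp_bound3 (t : ℝ) : |t| ^ 3 * Real.exp (-t ^ 2 / 2) ≤ 2 := by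
  have key : |t| * Real.exp (-t ^ 2 / 6) ≤ Real.sqrt 6 / 2 := by
    have h6 : Real.sqrt 6 ^ 2 = 6 := Real.sq_sqrt (by norm_num)
    have h6pos : (2:ℝ) ≤ Real.sqrt 6 := by nlinarith [Real.sqrt_nonneg 6]
    have hineq : 2 * |t| ≤ Real.sqrt 6 * (1 + t ^ 2 / 6) := by
      nlinarith [sq_nonneg (|t| - Real.sqrt 6), sq_abs t]
    have hexp : 1 + t ^ 2 / 6 ≤ Real.exp (t ^ 2 / 6) := by
      have := Real.add_one_le_exp (t ^ 2 / 6); linarith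
    have hpos := Real.exp_pos (t ^ 2 / 6)
    rw [show -t^2/6 = -(t^2/6) by ring, Real.exp_neg, mul_inv_le_iff₀ hpos]
    nlinarith [abs_nonneg t]
  have cube : (|t| * Real.exp (-t ^ 2 / 6)) ^ 3 = |t| ^ 3 * Real.exp (-t ^ 2 / 2) := by
    rw [mul_pow, ← Real.exp_nat_mul]
    ring_nf
  have hnn : 0 ≤ |t| * Real.exp (-t ^ 2 / 6) :=
    mul_nonneg (abs_nonneg t) (Real.exp_pos _).le
  have := pow_le_pow_left₀ hnn key 3
  rw [cube] at this
  have h63 : (Real.sqrt 6 / 2) ^ 3 ≤ 2 := by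
    have h6 : Real.sqrt 6 ^ 2 = 6 := Real.sq_sqrt (by norm_num)
    have h6le : Real.sqrt 6 ≤ 8/3 := by
      nlinarith [Real.sqrt_nonneg 6]
    nlinarith [Real.sqrt_nonneg 6]
  linarith

lemma phi_nonneg (t : ℝ) : 0 ≤ phi t := by
  unfold phi
  positivity

lemma F3_bound (t : ℝ) : |(t ^ 2 - 1) * phi t| ≤ 1 := by
  have h2 := exp_bound2 t
  have hsq := sqrt_two_pi_ge_two
  have hexp : Real.exp (-t^2/2) ≤ 1 := by
    rw [Real.exp_le_one_iff]; nlinarith [sq_nonneg t]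
  have habs : |t ^ 2 - 1| ≤ t ^ 2 + 1 := by
    rw [abs_le]; constructor <;> nlinarith [sq_nonneg t]
  rw [abs_mul, abs_of_nonneg (phi_nonneg t)]
  unfold phi
  have hexpos := (Real.exp_pos (-t^2/2)).le
  calc |t ^ 2 - 1| * (Real.exp (-t ^ 2 / 2) / Real.sqrt (2 * Real.pi))
      ≤ (t^2 + 1) * (Real.exp (-t ^ 2 / 2) / Real.sqrt (2 * Real.pi)) := by
        apply mul_le_mul_of_nonneg_right habs; positivity
    _ ≤ 1 := by
        rw [mul_div_assoc', div_le_one (by linarith : (0:ℝ) < Real.sqrt (2 * Real.pi))]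
        nlinarith

lemma taylor1 {f f' f'' : ℝ → ℝ} {s : Set ℝ} (hs : Convex ℝ s)
    (h1 : ∀ t ∈ s, HasDerivWithinAt f (f' t) s t)
    (h2 : ∀ t ∈ s, HasDerivWithinAt f' (f'' t) s t)
    {K : ℝ} (hK : ∀ t ∈ s, |f'' t| ≤ K)
    {x y : ℝ} (hx : x ∈ s) (hy : y ∈ s) :
    |f y - f x - f' x * (y - x)| ≤ K * |y - x| ^ 2 := by
  set I := Set.uIcc x y with hI
  have hIs : I ⊆ s := by
    rw [hI, ← segment_eq_uIcc]; exact hs.segment_subset hx hy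
  have hIc : Convex ℝ I := convex_uIcc x y
  have hxI : x ∈ I := Set.left_mem_uIcc
  have hyI : y ∈ I := Set.right_mem_uIcc
  -- step A : bound |f' t - f' x|
  have stepA : ∀ t ∈ I, |f' t - f' x| ≤ K * |y - x| := by
    intro t ht
    have := hIc.norm_image_sub_le_of_norm_hasDerivWithin_le
      (f := f') (f' := f'') (fun z hz => (h2 z (hIs hz)).mono hIs)
      (fun z hz => by rw [Real.norm_eq_abs]; exact hK z (hIs hz)) hxI ht
    rw [Real.norm_eq_abs, Real.norm_eq_abs] at this
    calc |f' t - f' x| ≤ K * |t - x| := this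
      _ ≤ K * |y - x| := by
          have hKnn : 0 ≤ K := le_trans (abs_nonneg _) (hK x hx)
          exact mul_le_mul_of_nonneg_left (abs_sub_left_of_mem_uIcc ht) hKnn
  -- step B
  have hg : ∀ t ∈ I, HasDerivWithinAt (fun z => f z - f' x * z) (f' t - f' x) I t := by
    intro t ht
    have := ((h1 t (hIs ht)).mono hIs).sub (((hasDerivAt_id t).const_mul (f' x)).hasDerivWithinAt (s := I))
    exact this.congr_deriv (by ring)
  have := hIc.norm_image_sub_le_of_norm_hasDerivWithin_le hg
    (fun z hz => by rw [Real.norm_eq_abs]; exact stepA z hz) hxI hyI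
  rw [Real.norm_eq_abs, Real.norm_eq_abs] at this
  calc |f y - f x - f' x * (y - x)| = |(f y - f' x * y) - (f x - f' x * x)| := by ring_nf
    _ ≤ K * |y - x| * |y - x| := this
    _ = K * |y - x| ^ 2 := by ring

lemma taylor2 {f f' f'' f''' : ℝ → ℝ}
    (h1 : ∀ t, HasDerivAt f (f' t) t) (h2 : ∀ t, HasDerivAt f' (f'' t) t)
    (h3 : ∀ t, HasDerivAt f'' (f''' t) t) {M : ℝ} (hM : ∀ t, |f''' t| ≤ M) (x y : ℝ) :
    |f y - f x - f' x * (y - x) - f'' x * (y - x) ^ 2 / 2| ≤ M * |y - x| ^ 3 := by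
  set I := Set.uIcc x y with hI
  have hIc : Convex ℝ I := convex_uIcc x y
  have hxI : x ∈ I := Set.left_mem_uIcc
  have hyI : y ∈ I := Set.right_mem_uIcc
  have stepA : ∀ t ∈ I, |f' t - f' x - f'' x * (t - x)| ≤ M * |y - x| ^ 2 := by
    intro t ht
    have h := taylor1 (convex_univ (𝕜 := ℝ) (E := ℝ)) (fun z _ => (h2 z).hasDerivWithinAt)
      (fun z _ => (h3 z).hasDerivWithinAt) (fun z _ => hM z)
      (Set.mem_univ x) (Set.mem_univ t)
    have hMnn : 0 ≤ M := le_trans (abs_nonneg _) (hM x)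
    calc |f' t - f' x - f'' x * (t - x)| ≤ M * |t - x| ^ 2 := h
      _ ≤ M * |y - x| ^ 2 := by
          apply mul_le_mul_of_nonneg_left _ hMnn
          exact pow_le_pow_left₀ (abs_nonneg _) (abs_sub_left_of_mem_uIcc ht) 2
  have hG : ∀ t ∈ I, HasDerivWithinAt
      (fun z => f z - f' x * z - f'' x * (z - x) ^ 2 / 2)
      (f' t - f' x - f'' x * (t - x)) I t := by
    intro t ht
    have hq : HasDerivAt (fun z : ℝ => f'' x * (z - x) ^ 2 / 2) (f'' x * (t - x)) t := by
      have hb : HasDerivAt (fun z : ℝ => (z - x) ^ 2) (2 * (t - x)) t := by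
        have := (((hasDerivAt_id t).sub_const x).pow 2)
        exact this.congr_deriv (Eq.symm (by simp [mul_comm]))
      have := (hb.const_mul (f'' x)).div_const 2
      exact this.congr_deriv (by ring)
    have := ((((h1 t).sub ((hasDerivAt_id t).const_mul (f' x))).sub hq)).hasDerivWithinAt (s := I)
    exact this.congr_deriv (by ring)
  have := hIc.norm_image_sub_le_of_norm_hasDerivWithin_le hG
    (fun z hz => by rw [Real.norm_eq_abs]; exact stepA z hz) hxI hyI
  rw [Real.norm_eq_abs, Real.norm_eq_abs] at this
  calc |f y - f x - f' x * (y - x) - f'' x * (y - x) ^ 2 / 2|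
      = |(f y - f' x * y - f'' x * (y - x) ^ 2 / 2) - (f x - f' x * x - f'' x * (x - x) ^ 2 / 2)| := by
        ring_nf
    _ ≤ M * |y - x| ^ 2 * |y - x| := this
    _ = M * |y - x| ^ 3 := by ring

noncomputable def cf (s : ℝ) : ℝ := (Real.sqrt (1 + s))⁻¹

lemma cf_pos {s : ℝ} (hs : 0 ≤ s) : 0 < cf s := by
  unfold cf
  exact inv_pos.mpr (Real.sqrt_pos.mpr (by linarith))

lemma cf_le_one {s : ℝ} (hs : 0 ≤ s) : cf s ≤ 1 := by
  unfold cf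
  rw [inv_le_one_iff₀]
  right
  have : Real.sqrt 1 ≤ Real.sqrt (1 + s) := Real.sqrt_le_sqrt (by linarith)
  simpa using this

lemma cf_hasDerivAt {s : ℝ} (hs : 0 ≤ s) : HasDerivAt cf (-(cf s) ^ 3 / 2) s := by
  have h1 : (0:ℝ) < 1 + s := by linarith
  have hsq : Real.sqrt (1 + s) ≠ 0 := ne_of_gt (Real.sqrt_pos.mpr h1)
  have hr : HasDerivAt (fun z : ℝ => Real.sqrt (1 + z)) (1 / (2 * Real.sqrt (1 + s))) s := by
    have := (Real.hasDerivAt_sqrt (ne_of_gt h1)).comp s ((hasDerivAt_id s).const_add 1)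
    exact this.congr_deriv (by simp)
  have := hr.inv hsq
  refine this.congr_deriv (Eq.symm ?_)
  unfold cf
  have hss : Real.sqrt (1 + s) ^ 2 = 1 + s := Real.sq_sqrt h1.le
  have h3 : Real.sqrt (1 + s) ^ 3 = (1 + s) * Real.sqrt (1 + s) := by
    rw [pow_succ, hss]
  field_simp

lemma h_hasDerivAt (u : ℝ) {s : ℝ} (hs : 0 ≤ s) :
    HasDerivAt (fun z => stdNormalCDF (u * cf z))
      (phi (u * cf s) * (u * (-(cf s) ^ 3 / 2))) s :=
  by have h := (hasDerivAt_cdf (u * cf s)).comp s ((cf_hasDerivAt hs).const_mul u); exact h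

lemma h1_hasDerivAt (u : ℝ) {s : ℝ} (hs : 0 ≤ s) :
    HasDerivAt (fun z => phi (u * cf z) * (u * (-(cf z) ^ 3 / 2)))
      (phi (u * cf s) * (3 * u / 4 * (cf s) ^ 5 - u ^ 3 / 4 * (cf s) ^ 7)) s := by
  have hc := cf_hasDerivAt hs
  have hphi : HasDerivAt (fun z => phi (u * cf z))
      (-(u * cf s) * phi (u * cf s) * (u * (-(cf s) ^ 3 / 2))) s :=
    by have h := (hasDerivAt_phi (u * cf s)).comp s (hc.const_mul u); exact h
  have hcube : HasDerivAt (fun z => u * (-(cf z) ^ 3 / 2))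
      (u * (3 * (cf s) ^ 5 / 4)) s := by
    have := (((hc.pow 3).neg).div_const 2).const_mul u
    refine this.congr_deriv (Eq.symm ?_)
    ring
  have := hphi.mul hcube
  refine this.congr_deriv (Eq.symm ?_)
  ring

lemma h2_bound (u : ℝ) {s : ℝ} (hs : s ∈ Set.Icc (0:ℝ) 1) :
    |phi (u * cf s) * (3 * u / 4 * (cf s) ^ 5 - u ^ 3 / 4 * (cf s) ^ 7)| ≤ 1 := by
  obtain ⟨hs0, hs1⟩ := hs
  have hc0 := cf_pos hs0
  have hc1 := cf_le_one hs0
  set c := cf s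
  set w := u * c with hw
  have hcpow : ∀ n : ℕ, c ^ n ≤ 1 := fun n => pow_le_one₀ hc0.le hc1
  have hcpos : ∀ n : ℕ, (0:ℝ) < c ^ n := fun n => pow_pos hc0 n
  have e1 : |3 * u / 4 * c ^ 5 - u ^ 3 / 4 * c ^ 7| ≤ (3 * |w| + |w| ^ 3) / 4 := by
    have habs1 : |3 * u / 4 * c ^ 5| ≤ 3 * |w| / 4 := by
      rw [abs_mul, abs_div, abs_mul]
      simp only [abs_of_pos (hcpos 5), Nat.abs_ofNat]
      rw [hw, abs_mul, abs_of_pos hc0]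
      have h4 : c ^ 5 = c * c ^ 4 := by ring
      have key := mul_le_of_le_one_right (mul_nonneg (abs_nonneg u) hc0.le) (hcpow 4)
      nlinarith [key, h4]
    have habs2 : |u ^ 3 / 4 * c ^ 7| ≤ |w| ^ 3 / 4 := by
      rw [abs_mul, abs_div, abs_pow]
      simp only [abs_of_pos (hcpos 7), Nat.abs_ofNat]
      rw [hw, abs_mul, abs_of_pos hc0]
      have h7 : c ^ 7 = c ^ 3 * c ^ 4 := by ring
      have key := mul_le_of_le_one_right
        (pow_nonneg (mul_nonneg (abs_nonneg u) hc0.le) 3) (hcpow 4)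
      have hmp : (|u| * c) ^ 3 = |u| ^ 3 * c ^ 3 := by ring
      nlinarith [key, h7, hmp]
    calc |3 * u / 4 * c ^ 5 - u ^ 3 / 4 * c ^ 7|
        ≤ |3 * u / 4 * c ^ 5| + |u ^ 3 / 4 * c ^ 7| := abs_sub _ _
      _ ≤ (3 * |w| + |w| ^ 3) / 4 := by linarith
  have e2 : phi w * ((3 * |w| + |w| ^ 3) / 4) ≤ 1 := by
    unfold phi
    have b1 := exp_bound1 w
    have b3 := exp_bound3 w
    have hsq := sqrt_two_pi_ge_two
    have hexp := (Real.exp_pos (-w ^ 2 / 2)).le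
    have habs := abs_nonneg w
    rw [div_mul_eq_mul_div, div_le_one (by linarith : (0:ℝ) < Real.sqrt (2 * Real.pi))]
    nlinarith
  calc |phi w * (3 * u / 4 * c ^ 5 - u ^ 3 / 4 * c ^ 7)|
      = phi w * |3 * u / 4 * c ^ 5 - u ^ 3 / 4 * c ^ 7| := by
        rw [abs_mul, abs_of_nonneg (phi_nonneg w)]
    _ ≤ phi w * ((3 * |w| + |w| ^ 3) / 4) := by
        exact mul_le_mul_of_nonneg_left e1 (phi_nonneg w)
    _ ≤ 1 := e2

lemma term2 (u : ℝ) {e : ℝ} (he : e ∈ Set.Icc (0:ℝ) 1) :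
    |stdNormalCDF (u * cf e) - stdNormalCDF u - e * (-(u / 2) * phi u)| ≤ e ^ 2 := by
  have hIcc : Convex ℝ (Set.Icc (0:ℝ) 1) := convex_Icc 0 1
  have h0 : (0:ℝ) ∈ Set.Icc (0:ℝ) 1 := by constructor <;> norm_num
  have ht := taylor1 hIcc
    (f := fun z => stdNormalCDF (u * cf z))
    (f' := fun z => phi (u * cf z) * (u * (-(cf z) ^ 3 / 2)))
    (f'' := fun z => phi (u * cf z) * (3 * u / 4 * (cf z) ^ 5 - u ^ 3 / 4 * (cf z) ^ 7))
    (fun t ht => (h_hasDerivAt u ht.1).hasDerivWithinAt)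
    (fun t ht => (h1_hasDerivAt u ht.1).hasDerivWithinAt)
    (K := 1) (fun t ht => h2_bound u ht) h0 he
  have hcf0 : cf 0 = 1 := by unfold cf; simp
  have ht' : |stdNormalCDF (u * cf e) - stdNormalCDF (u * cf 0)
      - phi (u * cf 0) * (u * (-(cf 0) ^ 3 / 2)) * (e - 0)| ≤ 1 * |e - 0| ^ 2 := ht
  rw [hcf0] at ht'
  have heq : stdNormalCDF (u * cf e) - stdNormalCDF u - e * (-(u / 2) * phi u)
      = stdNormalCDF (u * cf e) - stdNormalCDF (u * 1)
        - phi (u * 1) * (u * (-(1:ℝ) ^ 3 / 2)) * (e - 0) := by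
    rw [mul_one]; ring
  rw [heq]
  calc |stdNormalCDF (u * cf e) - stdNormalCDF (u * 1)
        - phi (u * 1) * (u * (-(1:ℝ) ^ 3 / 2)) * (e - 0)| ≤ 1 * |e - 0| ^ 2 := ht'
    _ = e ^ 2 := by rw [sub_zero, one_mul, abs_of_nonneg he.1]

theorem moment_matched_gaussian_third_order :
    ∃ C > 0, ∃ a₀ > 0, ∀ p ∈ Set.Ioo (0 : ℝ) 1, ∀ a ∈ Set.Ioo (0 : ℝ) a₀, ∀ x : ℝ,
      |p * stdNormalCDF (x - a) + (1 - p) * stdNormalCDF (x + a)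
        - stdNormalCDF ((x - (2 * p - 1) * a) / Real.sqrt (1 + 4 * p * (1 - p) * a ^ 2))|
      ≤ C * a ^ 3 := by
  refine ⟨9, by norm_num, 1, by norm_num, ?_⟩
  rintro p ⟨hp0, hp1⟩ a ⟨ha0, ha1⟩ x
  have hT1 := taylor2 hasDerivAt_cdf hasDerivAt_phi hasDerivAt_phi' (M := 1) F3_bound
    (x - (2 * p - 1) * a) (x - a)
  have hT2 := taylor2 hasDerivAt_cdf hasDerivAt_phi hasDerivAt_phi' (M := 1) F3_bound
    (x - (2 * p - 1) * a) (x + a)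
  have he : 4 * p * (1 - p) * a ^ 2 ∈ Set.Icc (0:ℝ) 1 := by
    constructor
    · nlinarith
    · nlinarith [sq_nonneg (p - 1/2), sq_nonneg a]
  have hT3 := term2 (x - (2 * p - 1) * a) he
  -- rewrite the abs arguments
  have habs1 : |x - a - (x - (2 * p - 1) * a)| = (2 - 2 * p) * a := by
    rw [show x - a - (x - (2 * p - 1) * a) = -((2 - 2 * p) * a) by ring, abs_neg,
      abs_of_pos (by nlinarith)]
  have habs2 : |x + a - (x - (2 * p - 1) * a)| = 2 * p * a := by
    rw [show x + a - (x - (2 * p - 1) * a) = 2 * p * a by ring,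
      abs_of_pos (by nlinarith)]
  rw [habs1] at hT1
  rw [habs2] at hT2
  -- beta-reduced restatements
  set u := x - (2 * p - 1) * a with hu
  set e := 4 * p * (1 - p) * a ^ 2 with hee
  have hB1 : |stdNormalCDF (x - a) - stdNormalCDF u - phi u * (x - a - u)
      - (-u * phi u) * (x - a - u) ^ 2 / 2| ≤ 1 * ((2 - 2 * p) * a) ^ 3 := hT1
  have hB2 : |stdNormalCDF (x + a) - stdNormalCDF u - phi u * (x + a - u)
      - (-u * phi u) * (x + a - u) ^ 2 / 2| ≤ 1 * (2 * p * a) ^ 3 := hT2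
  have hB3 : |stdNormalCDF (u * cf e) - stdNormalCDF u - e * (-(u / 2) * phi u)| ≤ e ^ 2 := hT3
  have hdiv : (x - (2 * p - 1) * a) / Real.sqrt (1 + 4 * p * (1 - p) * a ^ 2) = u * cf e := by
    rw [← hu, ← hee]; unfold cf; rw [div_eq_mul_inv]
  rw [hdiv]
  have hkey : p * stdNormalCDF (x - a) + (1 - p) * stdNormalCDF (x + a)
      - stdNormalCDF (u * cf e)
      = p * (stdNormalCDF (x - a) - stdNormalCDF u - phi u * (x - a - u)
          - (-u * phi u) * (x - a - u) ^ 2 / 2)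
        + (1 - p) * (stdNormalCDF (x + a) - stdNormalCDF u - phi u * (x + a - u)
          - (-u * phi u) * (x + a - u) ^ 2 / 2)
        - (stdNormalCDF (u * cf e) - stdNormalCDF u - e * (-(u / 2) * phi u)) := by
    rw [hu, hee]
    ring
  rw [hkey]
  have step : |p * (stdNormalCDF (x - a) - stdNormalCDF u - phi u * (x - a - u)
          - (-u * phi u) * (x - a - u) ^ 2 / 2)
        + (1 - p) * (stdNormalCDF (x + a) - stdNormalCDF u - phi u * (x + a - u)
          - (-u * phi u) * (x + a - u) ^ 2 / 2)
        - (stdNormalCDF (u * cf e) - stdNormalCDF u - e * (-(u / 2) * phi u))|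
      ≤ p * (1 * ((2 - 2 * p) * a) ^ 3) + (1 - p) * (1 * (2 * p * a) ^ 3) + e ^ 2 := by
    have t1 := abs_sub (p * (stdNormalCDF (x - a) - stdNormalCDF u - phi u * (x - a - u)
          - (-u * phi u) * (x - a - u) ^ 2 / 2)
        + (1 - p) * (stdNormalCDF (x + a) - stdNormalCDF u - phi u * (x + a - u)
          - (-u * phi u) * (x + a - u) ^ 2 / 2))
        (stdNormalCDF (u * cf e) - stdNormalCDF u - e * (-(u / 2) * phi u))
    have t2 := abs_add_le (p * (stdNormalCDF (x - a) - stdNormalCDF u - phi u * (x - a - u)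
          - (-u * phi u) * (x - a - u) ^ 2 / 2))
        ((1 - p) * (stdNormalCDF (x + a) - stdNormalCDF u - phi u * (x + a - u)
          - (-u * phi u) * (x + a - u) ^ 2 / 2))
    rw [abs_mul, abs_mul, abs_of_pos hp0, abs_of_pos (by linarith : (0:ℝ) < 1 - p)] at t2
    have m1 := mul_le_mul_of_nonneg_left hB1 hp0.le
    have m2 := mul_le_mul_of_nonneg_left hB2 (by linarith : (0:ℝ) ≤ 1 - p)
    linarith
  refine le_trans step ?_
  rw [hee]
  nlinarith [sq_nonneg (p - 1/2), sq_nonneg a, mul_nonneg (mul_nonneg ha0.le ha0.le) ha0.le,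
    mul_nonneg (mul_nonneg (mul_nonneg ha0.le ha0.le) ha0.le) (by linarith : (0:ℝ) ≤ 1 - a),
    mul_pos hp0 (by linarith : (0:ℝ) < 1 - p), sq_nonneg (p * (1 - p)), sq_nonneg (a * a)]
end
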